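/- For the complex number ξ(ε) = (1+g)² − 2ihg with g = (cos 4ε − 1)/4 and h = sin(4ε)/4, one has |ξ(ε)| ≤ 1 for all ε, with equality iff g(ε) = 0; hence the series Σ_{T≥1} Re(ξ^{T−1}) converges absolutely whenever g(ε) ≠ 0. -/

import Mathlib

/-- For `ξ(ε) = (1+g)² − 2ihg` with `g = (cos 4ε − 1)/4` and `h = sin(4ε)/4`,
one has `|ξ(ε)| ≤ 1`, with equality iff `g(ε) = 0`; hence the series
`Σ_{T≥1} Re(ξ^{T−1})` converges absolutely whenever `g(ε) ≠ 0`. -/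
theorem stmt_13 (ε : ℝ) :
    letI g : ℝ := (Real.cos (4 * ε) - 1) / 4
    letI h : ℝ := Real.sin (4 * ε) / 4
    letI ξ : ℂ := (1 + (g : ℂ)) ^ 2 - 2 * Complex.I * (h : ℂ) * (g : ℂ)
    ‖ξ‖ ≤ 1 ∧
    (‖ξ‖ = 1 ↔ g = 0) ∧
    (g ≠ 0 → Summable fun T : ℕ => |(ξ ^ T).re|) := by
  set g : ℝ := (Real.cos (4 * ε) - 1) / 4 with hgdef
  set h : ℝ := Real.sin (4 * ε) / 4 with hhdef
  set ξ : ℂ := (1 + (g : ℂ)) ^ 2 - 2 * Complex.I * (h : ℂ) * (g : ℂ) with hxdef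
  have hcs : Real.sin (4*ε) ^ 2 + Real.cos (4*ε) ^ 2 = 1 := Real.sin_sq_add_cos_sq _
  have hcle : Real.cos (4*ε) ≤ 1 := Real.cos_le_one _
  have hgle : g ≤ 0 := by rw [hgdef]; linarith
  have hgge : (-1:ℝ)/2 ≤ g := by
    have := Real.neg_one_le_cos (4*ε); rw [hgdef]; linarith
  have hsq : (‖ξ‖) ^ 2 = (1+g)^4 + 4*h^2*g^2 := by
    rw [Complex.sq_norm, Complex.normSq_apply]
    simp only [hxdef, Complex.sub_re, Complex.sub_im, Complex.add_re, Complex.add_im]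
    simp [Complex.ext_iff, Complex.sub_re, Complex.sub_im, Complex.mul_re, Complex.mul_im,
      Complex.I_re, Complex.I_im, Complex.ofReal_re, Complex.ofReal_im, pow_two]
    ring
  have hh2 : h^2 = -g/2 - g^2 := by
    rw [hhdef, hgdef]; nlinarith [hcs]
  have key : (‖ξ‖)^2 ≤ 1 := by
    rw [hsq, hh2]; nlinarith [sq_nonneg g, sq_nonneg (g+1)]
  have habs : ‖ξ‖ ≤ 1 := by
    nlinarith [norm_nonneg ξ]
  refine ⟨habs, ⟨fun he => ?_, fun hg0 => ?_⟩, fun hg0 => ?_⟩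
  · -- abs = 1 → g = 0
    by_contra hg
    have hglt : g < 0 := lt_of_le_of_ne hgle hg
    have : (‖ξ‖)^2 < 1 := by
      rw [hsq, hh2]; nlinarith
    rw [he] at this; norm_num at this
  · -- g = 0 → abs = 1
    have : (‖ξ‖)^2 = 1 := by rw [hsq, hg0]; ring
    nlinarith [norm_nonneg ξ]
  · have hglt : g < 0 := lt_of_le_of_ne hgle hg0
    have hlt : ‖ξ‖ < 1 := by
      have h2 : (‖ξ‖)^2 < 1 := by rw [hsq, hh2]; nlinarith
      nlinarith [norm_nonneg ξ]
    apply Summable.of_nonneg_of_le (fun T => abs_nonneg _)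
      (fun T => ?_) (summable_geometric_of_lt_one (norm_nonneg ξ) hlt)
    calc |(ξ^T).re| ≤ ‖ξ^T‖ := Complex.abs_re_le_norm _
      _ = ‖ξ‖ ^ T := by rw [norm_pow]
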